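/- Let p > 3 and c be distinct primes, let q be a prime satisfying condition (1), and let r be an integer with r² + c·p ≡ 0 (mod q). For all rational numbers w, x, y, z, the element γ = w + x·(1+j)/2 + y·(i+i·j)/2 + z·(r·j+i·j)/q of ℍ[ℚ, −cp, −q] satisfies Trd(γ) = 2w + x and Nrd(γ) = (w + x/2)² + q·(x/2 + r·z/q)² + c·p·y²/4 + c·p·q·(y/2 + z/q)². In particular, when y = 0 one has 4·Nrd(γ) − Trd(γ)² = q·x² + 4·r·x·z + ((4r² + 4cp)/q)·z². -/

import Mathlib

open Quaternion

/-- Condition (1) on the prime `q`. -/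
def SatisfiesCond1 (p c q : ℕ) (hq : q.Prime) : Prop :=
  (Odd c ∧ q % 8 = 3 ∧ @legendreSym q ⟨hq⟩ (p : ℤ) = -1 ∧ @legendreSym q ⟨hq⟩ (c : ℤ) = 1) ∨
  (c = 2 ∧ q % 8 = 7 ∧ @legendreSym q ⟨hq⟩ (p : ℤ) = -1)

/-- The reduced trace `Trd x = x + star x`, as a rational number. -/
def Trd {a b : ℚ} (x : ℍ[ℚ, a, b]) : ℚ := (x + star x).re

/-- The reduced norm `Nrd x = x · star x`, as a rational number. -/
def Nrd {a b : ℚ} (x : ℍ[ℚ, a, b]) : ℚ := (x * star x).re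

/-- Reduced trace and norm of a general element
`γ = w + x·(1+j)/2 + y·(i+i·j)/2 + z·(r·j+i·j)/q` of the Eichler order `O_c(q,r)`. -/
theorem trd_nrd_of_Ocqr_elt (p c q : ℕ) (hp : p.Prime) (hp3 : 3 < p) (hc : c.Prime)
    (hpc : p ≠ c) (hq : q.Prime) (hcond : SatisfiesCond1 p c q hq)
    (r : ℤ) (hr : (q : ℤ) ∣ r ^ 2 + (c : ℤ) * (p : ℤ)) (w x y z : ℚ)
    (γ : ℍ[ℚ, -((c : ℚ) * (p : ℚ)), -(q : ℚ)])
    (hγ : γ = ((w : ℚ) : ℍ[ℚ, -((c : ℚ) * (p : ℚ)), -(q : ℚ)]) +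
      x • ((2 : ℚ)⁻¹ • (1 + (⟨0, 0, 1, 0⟩ : ℍ[ℚ, -((c : ℚ) * (p : ℚ)), -(q : ℚ)]))) +
      y • ((2 : ℚ)⁻¹ • ((⟨0, 1, 0, 0⟩ : ℍ[ℚ, -((c : ℚ) * (p : ℚ)), -(q : ℚ)]) +
        (⟨0, 1, 0, 0⟩ : ℍ[ℚ, -((c : ℚ) * (p : ℚ)), -(q : ℚ)]) * ⟨0, 0, 1, 0⟩)) +
      z • ((q : ℚ)⁻¹ • ((r : ℚ) • (⟨0, 0, 1, 0⟩ : ℍ[ℚ, -((c : ℚ) * (p : ℚ)), -(q : ℚ)]) +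
        (⟨0, 1, 0, 0⟩ : ℍ[ℚ, -((c : ℚ) * (p : ℚ)), -(q : ℚ)]) * ⟨0, 0, 1, 0⟩))) :
    Trd γ = 2 * w + x ∧
    Nrd γ = (w + x / 2) ^ 2 + (q : ℚ) * (x / 2 + (r : ℚ) * z / (q : ℚ)) ^ 2 +
      (c : ℚ) * (p : ℚ) * y ^ 2 / 4 +
      (c : ℚ) * (p : ℚ) * (q : ℚ) * (y / 2 + z / (q : ℚ)) ^ 2 ∧
    (y = 0 → 4 * Nrd γ - Trd γ ^ 2 =
      (q : ℚ) * x ^ 2 + 4 * (r : ℚ) * x * z +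
        ((4 * (r : ℚ) ^ 2 + 4 * (c : ℚ) * (p : ℚ)) / (q : ℚ)) * z ^ 2) := by

  have hq0 : (q : ℚ) ≠ 0 := Nat.cast_ne_zero.mpr hq.ne_zero
  obtain ⟨k, hk⟩ := hr
  have hkq : (r : ℚ) ^ 2 + (c : ℚ) * (p : ℚ) = (q : ℚ) * (k : ℚ) := by
    exact_mod_cast congrArg (Int.cast : ℤ → ℚ) hk
  subst hγ
  simp only [Trd, Nrd, QuaternionAlgebra.re_add, QuaternionAlgebra.re_mul,
    QuaternionAlgebra.re_smul, QuaternionAlgebra.imI_smul, QuaternionAlgebra.imJ_smul,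
    QuaternionAlgebra.imK_smul, QuaternionAlgebra.imI_add, QuaternionAlgebra.imJ_add,
    QuaternionAlgebra.imK_add, QuaternionAlgebra.imI_mul, QuaternionAlgebra.imJ_mul,
    QuaternionAlgebra.imK_mul, QuaternionAlgebra.re_star, QuaternionAlgebra.imI_star,
    QuaternionAlgebra.imJ_star, QuaternionAlgebra.imK_star, QuaternionAlgebra.re_one,
    QuaternionAlgebra.imI_one, QuaternionAlgebra.imJ_one, QuaternionAlgebra.imK_one,
    QuaternionAlgebra.re_coe, QuaternionAlgebra.imI_coe, QuaternionAlgebra.imJ_coe,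
    QuaternionAlgebra.imK_coe, smul_eq_mul]
  refine ⟨by ring, ?_, ?_⟩
  · field_simp
    ring
  · intro hy
    subst hy
    field_simp
    nlinarith [hkq, sq_nonneg ((q:ℚ)), sq_nonneg z]
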